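/- Let G be a 2-connected planar simple graph with Δ(G) ≥ 5 that contains none of the configurations (A1)–(A4), and let H be a component of the graph obtained from G by deleting all vertices of degree 2. If u is a vertex of H with d(u) = 5 such that u has at least one neighbor in G of degree 4 and at least two neighbors in G of degree at most 5, then u has exactly 3 neighbors in H of H-degree at least 10 (n'_{10^+}(u) = 3). -/

import Mathlib

open SimpleGraph

/-- The degree of a vertex `v` of `G` (cardinality of its neighbor set). -/
noncomputable def deg {V : Type*} (G : SimpleGraph V) (v : V) : ℕ :=
  (G.neighborSet v).ncard

/-- The maximum degree `Δ(G)` of a finite graph `G`. -/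
noncomputable def maxDeg {V : Type*} [Fintype V] (G : SimpleGraph V) : ℕ :=
  Finset.univ.sup fun v => deg G v

/-- The number of neighbors of `u` in `G` whose degree is exactly `k`. -/
noncomputable def nDegEq {V : Type*} (G : SimpleGraph V) (u : V) (k : ℕ) : ℕ :=
  {w | w ∈ G.neighborSet u ∧ deg G w = k}.ncard

/-- The number of neighbors of `u` in `G` whose degree is at most `k`. -/
noncomputable def nDegLe {V : Type*} (G : SimpleGraph V) (u : V) (k : ℕ) : ℕ :=
  {w | w ∈ G.neighborSet u ∧ deg G w ≤ k}.ncard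

/-- The number of neighbors of `u` in `G` whose degree is at least `k`. -/
noncomputable def nDegGe {V : Type*} (G : SimpleGraph V) (u : V) (k : ℕ) : ℕ :=
  {w | w ∈ G.neighborSet u ∧ k ≤ deg G w}.ncard

/-- `H` is a minor of `G`: there is a family of pairwise disjoint connected branch sets
indexed by the vertices of `H`, with an edge of `G` between the branch sets of any two
adjacent vertices of `H`. -/
def IsMinorOf {W V : Type*} (H : SimpleGraph W) (G : SimpleGraph V) : Prop :=
  ∃ φ : W → Set V,
    (∀ w, (G.induce (φ w)).Connected) ∧
    (∀ w₁ w₂, w₁ ≠ w₂ → Disjoint (φ w₁) (φ w₂)) ∧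
    ∀ ⦃w₁ w₂⦄, H.Adj w₁ w₂ → ∃ a ∈ φ w₁, ∃ b ∈ φ w₂, G.Adj a b

/-- A graph is planar iff it can be embedded in the plane; by Wagner's theorem this is
equivalent to having neither a `K₅` nor a `K₃,₃` minor. -/
def IsPlanar {V : Type*} (G : SimpleGraph V) : Prop :=
  ¬ IsMinorOf (completeGraph (Fin 5)) G ∧
  ¬ IsMinorOf (completeBipartiteGraph (Fin 3) (Fin 3)) G

/-- A graph is 2-connected: it has at least 3 vertices and deleting any single vertex
leaves a connected graph. -/
def TwoConnected {V : Type*} [Fintype V] (G : SimpleGraph V) : Prop :=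
  3 ≤ Fintype.card V ∧ ∀ v : V, (G.induce {w | w ≠ v}).Connected

/-- A proper edge coloring: distinct edges sharing a vertex get different colors. -/
def ProperEdgeColoring {V α : Type*} (G : SimpleGraph V) (c : Sym2 V → α) : Prop :=
  ∀ e₁ ∈ G.edgeSet, ∀ e₂ ∈ G.edgeSet, e₁ ≠ e₂ → (∃ v, v ∈ e₁ ∧ v ∈ e₂) → c e₁ ≠ c e₂

/-- An acyclic edge coloring: a proper edge coloring with no bichromatic cycle. -/
def AcyclicEdgeColoring {V α : Type*} (G : SimpleGraph V) (c : Sym2 V → α) : Prop :=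
  ProperEdgeColoring G c ∧
  ∀ (v : V) (w : G.Walk v v), w.IsCycle →
    ¬ ∃ i j : α, ∀ e ∈ w.edges, c e = i ∨ c e = j

/-- Configuration (A₁): a path `u v w` with `d(v) = 2` and `d(u) ≤ 9`. -/
def ConfigA1 {V : Type*} (G : SimpleGraph V) : Prop :=
  ∃ u v w : V, G.Adj u v ∧ G.Adj v w ∧ u ≠ w ∧ deg G v = 2 ∧ deg G u ≤ 9

/-- Configuration (A₂). -/
def ConfigA2 {V : Type*} (G : SimpleGraph V) : Prop :=
  ∃ u : V, 1 ≤ nDegEq G u 2 ∧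
    ((deg G u : ℤ) - 7 ≤ (nDegLe G u 8 : ℤ) ∨
     ((nDegLe G u 8 : ℤ) = (deg G u : ℤ) - 8 ∧ (deg G u : ℤ) - 9 ≤ (nDegEq G u 2 : ℤ)))

/-- Configuration (A₃). -/
def ConfigA3 {V : Type*} (G : SimpleGraph V) : Prop :=
  ∃ u v : V, G.Adj u v ∧ deg G u = 3 ∧
    (deg G v ≤ 8 ∨
     (deg G v = 9 ∧ ∃ w, G.Adj u w ∧ G.Adj v w) ∨
     (deg G v = 10 ∧ 5 ≤ nDegLe G v 5 ∧
       ∃ w₁ w₂, w₁ ≠ w₂ ∧ G.Adj u w₁ ∧ G.Adj v w₁ ∧ G.Adj u w₂ ∧ G.Adj v w₂))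

/-- Configuration (A₄). -/
def ConfigA4 {V : Type*} (G : SimpleGraph V) : Prop :=
  (∃ v u v₂ v₃ v₄ : V,
     deg G v = 4 ∧
     G.Adj v u ∧ G.Adj v v₂ ∧ G.Adj v v₃ ∧ G.Adj v v₄ ∧
     ([u, v₂, v₃, v₄] : List V).Pairwise (· ≠ ·) ∧
     deg G u ≤ deg G v₂ ∧ deg G v₂ ≤ deg G v₃ ∧ deg G v₃ ≤ deg G v₄ ∧
     4 ≤ deg G u ∧ deg G u ≤ 7 ∧ deg G u + deg G v₂ ≤ 17) ∨
  (∃ v u v₂ v₃ v₄ v₅ : V,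
     deg G v = 5 ∧
     G.Adj v u ∧ G.Adj v v₂ ∧ G.Adj v v₃ ∧ G.Adj v v₄ ∧ G.Adj v v₅ ∧
     ([u, v₂, v₃, v₄, v₅] : List V).Pairwise (· ≠ ·) ∧
     deg G u ≤ deg G v₂ ∧ deg G v₂ ≤ deg G v₃ ∧ deg G v₃ ≤ deg G v₄ ∧
       deg G v₄ ≤ deg G v₅ ∧
     ((4 ≤ deg G u ∧ deg G u ≤ 6 ∧ deg G u + deg G v₂ + deg G v₃ ≤ 18) ∨
      (deg G u = 6 ∧ deg G v₂ = 6 ∧ deg G v₃ = 7 ∧ deg G v₄ = 7 ∧ deg G v₅ = 7 ∧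
        G.Adj u v₅)))

lemma list_eq_five {α : Type*} {l : List α} (h : l.length = 5) :
    ∃ a b c d e, l = [a, b, c, d, e] := by
  rcases l with _ | ⟨a, l⟩; · simp at h
  rcases l with _ | ⟨b, l⟩; · simp at h
  rcases l with _ | ⟨c, l⟩; · simp at h
  rcases l with _ | ⟨d, l⟩; · simp at h
  rcases l with _ | ⟨e, l⟩; · simp at h
  rcases l with _ | ⟨f, l⟩
  · exact ⟨a, b, c, d, e, rfl⟩
  · simp at h

theorem claim_five_vertex {V : Type*} [Fintype V] (G : SimpleGraph V)
    (h2 : TwoConnected G) (hplanar : IsPlanar G) (hΔ : 5 ≤ maxDeg G)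
    (hA1 : ¬ ConfigA1 G) (hA2 : ¬ ConfigA2 G) (hA3 : ¬ ConfigA3 G) (hA4 : ¬ ConfigA4 G) :
    ∀ u : ↥{v : V | deg G v ≠ 2}, deg G ↑u = 5 →
      1 ≤ nDegEq G ↑u 4 → 2 ≤ nDegLe G ↑u 5 →
      {w | w ∈ (G.induce {v : V | deg G v ≠ 2}).neighborSet u ∧
        10 ≤ deg (G.induce {v : V | deg G v ≠ 2}) w}.ncard = 3 := by
  classical
  set S : Set V := {v : V | deg G v ≠ 2} with hSdef
  intro u hu5 h4 h5
  -- every neighbor of u has degree ≥ 4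
  have hmin : ∀ y, G.Adj (↑u : V) y → 4 ≤ deg G y := by
    intro y hy
    by_contra hlt
    push_neg at hlt
    have h1 : 0 < deg G y := (Set.ncard_pos (Set.toFinite _)).mpr ⟨↑u, hy.symm⟩
    have hcases : deg G y = 1 ∨ deg G y = 2 ∨ deg G y = 3 := by omega
    rcases hcases with hdy | hdy | hdy
    · -- degree 1: contradicts 2-connectedness
      obtain ⟨a, ha⟩ := Set.ncard_eq_one.mp (hdy : (G.neighborSet y).ncard = 1)
      have hau : a = (↑u : V) := by
        have h' : (↑u : V) ∈ G.neighborSet y := hy.symm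
        rw [ha] at h'; exact h'.symm
      subst hau
      obtain ⟨hcard3, hconn⟩ := h2
      have hz : ∃ z : V, z ≠ y ∧ z ≠ (↑u : V) := by
        by_contra hz
        push_neg at hz
        have hsub : (Finset.univ : Finset V) ⊆ {y, (↑u : V)} := by
          intro z _
          rcases eq_or_ne z y with h | h
          · simp [h]
          · simp [hz z h]
        have h1' := Finset.card_le_card hsub
        have h2' : ({y, (↑u : V)} : Finset V).card ≤ 2 :=
          le_trans (Finset.card_insert_le _ _) (by simp)
        rw [Finset.card_univ] at h1'
        omega
      obtain ⟨z, hzy, hzu⟩ := hz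
      have hyu : y ≠ (↑u : V) := hy.ne'
      have hreach := (hconn (↑u : V)).preconnected ⟨y, hyu⟩ ⟨z, hzu⟩
      obtain ⟨p⟩ := hreach
      cases p with
      | nil => exact hzy rfl
      | cons hadj p' =>
        rename_i b
        have hb : (↑b : V) ∈ G.neighborSet y := hadj
        rw [ha] at hb
        exact b.2 hb
    · -- degree 2: configuration A1
      have hw : ∃ w ∈ G.neighborSet y, w ≠ (↑u : V) := by
        by_contra h
        push_neg at h
        have hsub : G.neighborSet y ⊆ {(↑u : V)} := fun w hw => h w hw
        have hle1 := Set.ncard_le_ncard hsub (Set.toFinite _)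
        rw [Set.ncard_singleton] at hle1
        have hdy' : (G.neighborSet y).ncard = 2 := hdy
        omega
      obtain ⟨w, hw1, hw2⟩ := hw
      exact hA1 ⟨↑u, y, w, hy, hw1, hw2.symm, hdy, by omega⟩
    · -- degree 3: configuration A3
      exact hA3 ⟨y, ↑u, hy.symm, hdy, Or.inl (by omega)⟩
  -- set up the sorted list of neighbors of u
  have hNfin : (G.neighborSet (↑u : V)).Finite := Set.toFinite _
  set l₀ := hNfin.toFinset.toList with hl₀def
  have hmem₀ : ∀ x, x ∈ l₀ ↔ x ∈ G.neighborSet (↑u : V) := by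
    intro x; rw [hl₀def, Finset.mem_toList, Set.Finite.mem_toFinset]
  have hnd₀ : l₀.Nodup := Finset.nodup_toList _
  have hlen₀ : l₀.length = 5 := by
    rw [hl₀def, Finset.length_toList, ← Set.ncard_eq_toFinset_card _ hNfin]
    exact hu5
  haveI : IsTotal V (fun a b => deg G a ≤ deg G b) := ⟨fun a b => le_total _ _⟩
  haveI : IsTrans V (fun a b => deg G a ≤ deg G b) := ⟨fun a b c => le_trans⟩
  set l := List.insertionSort (fun a b => deg G a ≤ deg G b) l₀ with hldef
  have hperm : List.Perm l l₀ := List.perm_insertionSort _ _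
  have hmem : ∀ x, x ∈ l ↔ G.Adj (↑u : V) x := by
    intro x; rw [hperm.mem_iff, hmem₀]; exact Iff.rfl
  have hnd : l.Nodup := hperm.nodup_iff.mpr hnd₀
  have hlen : l.length = 5 := by rw [hperm.length_eq, hlen₀]
  have hsort : List.Pairwise (fun a b => deg G a ≤ deg G b) l :=
    List.pairwise_insertionSort _ _
  obtain ⟨w₁, w₂, w₃, w₄, w₅, hleq⟩ := list_eq_five hlen
  rw [hleq] at hsort hnd
  have hndL := hnd
  have hmemw : ∀ x, x = w₁ ∨ x = w₂ ∨ x = w₃ ∨ x = w₄ ∨ x = w₅ ↔ G.Adj (↑u : V) x := by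
    intro x; rw [← hmem x, hleq]; simp
  have haw : ∀ x ∈ ([w₁, w₂, w₃, w₄, w₅] : List V), G.Adj (↑u : V) x := by
    intro x hx
    rw [← hmem x, hleq]; exact hx
  have ha1 : G.Adj (↑u : V) w₁ := haw w₁ (by simp)
  have ha2 : G.Adj (↑u : V) w₂ := haw w₂ (by simp)
  have ha3 : G.Adj (↑u : V) w₃ := haw w₃ (by simp)
  have ha4 : G.Adj (↑u : V) w₄ := haw w₄ (by simp)
  have ha5 : G.Adj (↑u : V) w₅ := haw w₅ (by simp)
  simp only [List.pairwise_cons, List.mem_cons, List.mem_singleton, List.not_mem_nil,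
    forall_eq_or_imp, forall_eq, List.Pairwise.nil, and_true, IsEmpty.forall_iff,
    List.pairwise_singleton] at hsort
  obtain ⟨⟨h12, h13, h14, h15'⟩, ⟨h23, h24, h25'⟩, ⟨h34, h35'⟩, h45'⟩ := hsort
  have h15 : deg G w₁ ≤ deg G w₅ := h15'.1
  have h25 : deg G w₂ ≤ deg G w₅ := h25'.1
  have h35 : deg G w₃ ≤ deg G w₅ := h35'.1
  have h45 : deg G w₄ ≤ deg G w₅ := h45'.1.1
  simp only [List.nodup_cons, List.mem_cons, List.mem_singleton, List.not_mem_nil,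
    not_or, List.nodup_nil, and_true, or_false] at hnd
  obtain ⟨⟨n12, n13, n14, n15⟩, ⟨n23, n24, n25⟩, ⟨n34, n35⟩, n45'⟩ := hnd
  have n45 : w₄ ≠ w₅ := n45'.1
  -- w₁ has degree 4
  obtain ⟨p, hpadj, hp4⟩ :
      ∃ p, G.Adj (↑u : V) p ∧ deg G p = 4 := by
    have h4' : {w | w ∈ G.neighborSet (↑u : V) ∧ deg G w = 4}.ncard ≠ 0 := by
      have h4'' : 1 ≤ {w | w ∈ G.neighborSet (↑u : V) ∧ deg G w = 4}.ncard := h4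
      omega
    obtain ⟨p, hp1, hp2⟩ := Set.nonempty_of_ncard_ne_zero h4'
    exact ⟨p, hp1, hp2⟩
  have hd1le : deg G w₁ ≤ 4 := by
    have hp := (hmemw p).mpr hpadj
    rcases hp with rfl | hp
    · omega
    · rw [← hp4]
      rcases hp with rfl | rfl | rfl | rfl
      · exact h12
      · exact h13
      · exact h14
      · exact h15
  have hd1 : deg G w₁ = 4 := le_antisymm hd1le (hmin w₁ ha1)
  -- w₂ has degree ≤ 5
  obtain ⟨q₁, q₂, hq₁, hq₂, hqne⟩ :
      ∃ a b, (a ∈ G.neighborSet (↑u : V) ∧ deg G a ≤ 5) ∧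
        (b ∈ G.neighborSet (↑u : V) ∧ deg G b ≤ 5) ∧ a ≠ b := by
    have h2' : 1 < ({w | w ∈ G.neighborSet (↑u : V) ∧ deg G w ≤ 5}).ncard := by
      have h5' : 2 ≤ {w | w ∈ G.neighborSet (↑u : V) ∧ deg G w ≤ 5}.ncard := h5
      omega
    obtain ⟨a, b, ha, hb, hab⟩ := (Set.one_lt_ncard_iff (Set.toFinite _)).mp h2'
    exact ⟨a, b, ha, hb, hab⟩
  have hd2 : deg G w₂ ≤ 5 := by
    obtain ⟨q, hqadj, hqdeg, hqw⟩ : ∃ q, G.Adj (↑u : V) q ∧ deg G q ≤ 5 ∧ q ≠ w₁ := by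
      rcases eq_or_ne q₁ w₁ with rfl | h
      · exact ⟨q₂, hq₂.1, hq₂.2, fun h => hqne h.symm⟩
      · exact ⟨q₁, hq₁.1, hq₁.2, h⟩
    have hq := (hmemw q).mpr hqadj
    rcases hq with rfl | rfl | hq
    · exact (hqw rfl).elim
    · exact hqdeg
    · refine le_trans ?_ hqdeg
      rcases hq with rfl | rfl | rfl
      · exact h23
      · exact h24
      · exact h25
  -- w₃, w₄, w₅ have degree ≥ 10 (else configuration A4.2)
  have hd3 : 10 ≤ deg G w₃ := by
    by_contra hlt
    push_neg at hlt
    refine hA4 (Or.inr ⟨↑u, w₁, w₂, w₃, w₄, w₅, hu5, ha1, ha2, ha3, ha4, ha5, ?_,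
      h12, h23, h34, h45, Or.inl ⟨by omega, by omega, by omega⟩⟩)
    exact hndL
  have hd4 : 10 ≤ deg G w₄ := le_trans hd3 h34
  have hd5 : 10 ≤ deg G w₅ := le_trans hd4 h45
  -- degree in H as an ncard over V
  have himg : ∀ w : ↥S, (Subtype.val '' ((G.induce S).neighborSet w) : Set V)
      = {y | y ∈ S ∧ G.Adj (↑w) y} := by
    intro w
    ext y
    constructor
    · rintro ⟨z, hz, rfl⟩
      exact ⟨z.2, hz⟩
    · rintro ⟨hyS, hadj⟩
      exact ⟨⟨y, hyS⟩, hadj, rfl⟩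
  have hdegi : ∀ w : ↥S, deg (G.induce S) w = {y | y ∈ S ∧ G.Adj (↑w) y}.ncard := by
    intro w
    show ((G.induce S).neighborSet w).ncard = _
    rw [← himg w, Set.ncard_image_of_injective _ Subtype.val_injective]
  have hle : ∀ w : ↥S, deg (G.induce S) w ≤ deg G (↑w) := by
    intro w
    rw [hdegi w]
    exact Set.ncard_le_ncard (fun y hy => hy.2) (Set.toFinite _)
  -- a neighbor of u of degree ≥ 10 has H-degree ≥ 10
  have hge10 : ∀ (x : V) (hxS : x ∈ S), G.Adj (↑u : V) x → 10 ≤ deg G x →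
      10 ≤ deg (G.induce S) ⟨x, hxS⟩ := by
    intro x hxS hadj hdx
    rw [hdegi]
    have hset : {y | y ∈ S ∧ G.Adj x y} =
        G.neighborSet x \ {y | y ∈ G.neighborSet x ∧ deg G y = 2} := by
      ext y
      simp only [Set.mem_setOf_eq, Set.mem_diff, SimpleGraph.mem_neighborSet, hSdef]
      tauto
    have hBA : {y | y ∈ G.neighborSet x ∧ deg G y = 2} ⊆ G.neighborSet x :=
      fun y hy => hy.1
    have hkey : {y | y ∈ G.neighborSet x ∧ deg G y = 2}.ncard + 10 ≤ deg G x := by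
      rcases Nat.eq_zero_or_pos ({y | y ∈ G.neighborSet x ∧ deg G y = 2}.ncard) with h0 | h0
      · omega
      · -- use ¬ ConfigA2 at x
        have hn2 : 1 ≤ nDegEq G x 2 := h0
        have hnA2 : ¬ ((deg G x : ℤ) - 7 ≤ (nDegLe G x 8 : ℤ) ∨
            ((nDegLe G x 8 : ℤ) = (deg G x : ℤ) - 8 ∧
              (deg G x : ℤ) - 9 ≤ (nDegEq G x 2 : ℤ))) :=
          fun h => hA2 ⟨x, hn2, h⟩
        have hins : insert (↑u : V) {y | y ∈ G.neighborSet x ∧ deg G y = 2} ⊆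
            {w | w ∈ G.neighborSet x ∧ deg G w ≤ 8} := by
          intro y hy
          rcases Set.mem_insert_iff.mp hy with rfl | ⟨hy1, hy2⟩
          · exact ⟨hadj.symm, by omega⟩
          · exact ⟨hy1, by omega⟩
        have hnotmem : (↑u : V) ∉ {y | y ∈ G.neighborSet x ∧ deg G y = 2} := by
          rintro ⟨-, h2'⟩; rw [hu5] at h2'; omega
        have hcard := Set.ncard_insert_of_notMem hnotmem (Set.toFinite _)
        have hle8 := Set.ncard_le_ncard hins (Set.toFinite _)
        rw [hcard] at hle8
        have hn2eq : nDegEq G x 2 = {y | y ∈ G.neighborSet x ∧ deg G y = 2}.ncard := rfl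
        have hn8eq : nDegLe G x 8 = {w | w ∈ G.neighborSet x ∧ deg G w ≤ 8}.ncard := rfl
        rw [hn2eq, hn8eq] at hnA2
        omega
    rw [hset, Set.ncard_diff hBA (Set.toFinite _)]
    have hdeq : deg G x = (G.neighborSet x).ncard := rfl
    omega
  -- identify the target set
  have himgT : (Subtype.val ''
      {w | w ∈ (G.induce S).neighborSet u ∧ 10 ≤ deg (G.induce S) w} : Set V)
      = {w₃, w₄, w₅} := by
    ext x
    constructor
    · rintro ⟨⟨x', hxS⟩, ⟨hadj, hdeg⟩, rfl⟩
      have hadj' : G.Adj (↑u : V) x' := hadj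
      have hdx : 10 ≤ deg G x' := le_trans hdeg (hle ⟨x', hxS⟩)
      have hx := (hmemw x').mpr hadj'
      simp only [Set.mem_insert_iff, Set.mem_singleton_iff]
      rcases hx with rfl | rfl | rfl | rfl | rfl
      · omega
      · omega
      · exact Or.inl rfl
      · exact Or.inr (Or.inl rfl)
      · exact Or.inr (Or.inr rfl)
    · intro hx
      simp only [Set.mem_insert_iff, Set.mem_singleton_iff] at hx
      have key : ∀ y : V, G.Adj (↑u : V) y → 10 ≤ deg G y →
          y ∈ (Subtype.val ''
            {w | w ∈ (G.induce S).neighborSet u ∧ 10 ≤ deg (G.induce S) w} : Set V) := by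
        intro y hadj hdy
        have hyS : y ∈ S := by
          rw [hSdef]; simp only [Set.mem_setOf_eq]; omega
        exact ⟨⟨y, hyS⟩, ⟨hadj, hge10 y hyS hadj hdy⟩, rfl⟩
      rcases hx with hx | hx | hx
      · rw [hx]; exact key w₃ ha3 hd3
      · rw [hx]; exact key w₄ ha4 hd4
      · rw [hx]; exact key w₅ ha5 hd5
  have hfinal := Set.ncard_image_of_injective
    {w | w ∈ (G.induce S).neighborSet u ∧ 10 ≤ deg (G.induce S) w}
    (Subtype.val_injective (p := fun v => v ∈ S))
  rw [← hfinal, himgT]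
  rw [Set.ncard_eq_three]
  exact ⟨w₃, w₄, w₅, n34, n35, n45, rfl⟩
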